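/- For even n ≥ 4, the dual cone of the cone generated by the extremal states {ω_i : 0 ≤ i < n} equals the cone generated by the extremal effects {e_j : 0 ≤ j < n}; moreover this dual cone equals the state cone rotated about the z-axis by angle π/n (weak self-duality). -/

import Mathlib

open Real

noncomputable def rn (n : ℕ) : ℝ := Real.sqrt (1 / Real.cos (π / n))

noncomputable def ωst (n : ℕ) (i : ℤ) : Fin 3 → ℝ :=
  ![rn n * Real.cos (2 * π * (i : ℝ) / n), rn n * Real.sin (2 * π * (i : ℝ) / n), 1]

noncomputable def eEv (n : ℕ) (j : ℤ) : Fin 3 → ℝ :=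
  ![rn n * Real.cos ((2 * (j : ℝ) - 1) * π / n) / 2,
    rn n * Real.sin ((2 * (j : ℝ) - 1) * π / n) / 2, 1 / 2]

noncomputable def eOd (n : ℕ) (j : ℤ) : Fin 3 → ℝ :=
  (1 / (1 + rn n ^ 2)) •
    ![rn n * Real.cos (2 * π * (j : ℝ) / n), rn n * Real.sin (2 * π * (j : ℝ) / n), 1]

noncomputable def ip (v w : Fin 3 → ℝ) : ℝ := v 0 * w 0 + v 1 * w 1 + v 2 * w 2

noncomputable def uE : Fin 3 → ℝ := ![0, 0, 1]

noncomputable def dualCone (C : Set (Fin 3 → ℝ)) : Set (Fin 3 → ℝ) :=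
  {f | ∀ v ∈ C, 0 ≤ ip f v}

noncomputable def stateCone (n : ℕ) : Set (Fin 3 → ℝ) :=
  {v | ∃ c : Fin n → ℝ, (∀ i, 0 ≤ c i) ∧ v = ∑ i, c i • ωst n ((i : ℕ) : ℤ)}

noncomputable def effectConeEv (n : ℕ) : Set (Fin 3 → ℝ) :=
  {f | ∃ c : Fin n → ℝ, (∀ j, 0 ≤ c j) ∧ f = ∑ j, c j • eEv n ((j : ℕ) : ℤ)}

noncomputable def rotZ (θ : ℝ) (v : Fin 3 → ℝ) : Fin 3 → ℝ :=
  ![Real.cos θ * v 0 - Real.sin θ * v 1, Real.sin θ * v 0 + Real.cos θ * v 1, v 2]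

/-! ### Auxiliary lemmas -/

lemma vec3_eq {v w : Fin 3 → ℝ} (h0 : v 0 = w 0) (h1 : v 1 = w 1) (h2 : v 2 = w 2) : v = w := by
  funext i; fin_cases i <;> assumption

lemma sum_comp {k : ℕ} (c : Fin k → ℝ) (g : Fin k → Fin 3 → ℝ) (t : Fin 3) :
    (∑ i, c i • g i) t = ∑ i, c i * g i t := by
  simp [Finset.sum_apply]

lemma ip_sum {k : ℕ} (f : Fin 3 → ℝ) (c : Fin k → ℝ) (g : Fin k → Fin 3 → ℝ) :
    ip f (∑ i, c i • g i) = ∑ i, c i * ip f (g i) := by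
  simp only [ip, sum_comp, Finset.mul_sum]
  rw [← Finset.sum_add_distrib, ← Finset.sum_add_distrib]
  exact Finset.sum_congr rfl fun i _ => by ring

lemma ip_sum' {k : ℕ} (w : Fin 3 → ℝ) (c : Fin k → ℝ) (g : Fin k → Fin 3 → ℝ) :
    ip (∑ i, c i • g i) w = ∑ i, c i * ip (g i) w := by
  simp only [ip, sum_comp, Finset.sum_mul]
  rw [← Finset.sum_add_distrib, ← Finset.sum_add_distrib]
  exact Finset.sum_congr rfl fun i _ => by ring

lemma natmod_dvd (n x : ℕ) : (n:ℤ) ∣ (((x % n : ℕ) : ℤ) - (x : ℤ)) := by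
  have h : ((x % n : ℕ) : ℤ) + (n:ℤ) * ((x / n : ℕ) : ℤ) = (x:ℤ) := by
    exact_mod_cast Nat.mod_add_div x n
  exact ⟨-((x / n : ℕ) : ℤ), by linarith⟩

lemma ωst_congr {n : ℕ} (hn : 0 < n) {k k' : ℤ} (h : (n:ℤ) ∣ (k - k')) :
    ωst n k = ωst n k' := by
  obtain ⟨m, hm⟩ := h
  have hk : (k : ℝ) = k' + n * m := by
    have : (k : ℝ) - k' = n * m := by exact_mod_cast congrArg (Int.cast : ℤ → ℝ) hm
    linarith
  have hnn : (n : ℝ) ≠ 0 := by positivity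
  have ha : 2 * π * (k:ℝ) / n = 2 * π * (k':ℝ) / n + m * (2 * π) := by
    rw [hk]; field_simp
  unfold ωst
  rw [ha, Real.cos_add_int_mul_two_pi, Real.sin_add_int_mul_two_pi]

lemma eEv_congr {n : ℕ} (hn : 0 < n) {k k' : ℤ} (h : (n:ℤ) ∣ (k - k')) :
    eEv n k = eEv n k' := by
  obtain ⟨m, hm⟩ := h
  have hk : (k : ℝ) = k' + n * m := by
    have : (k : ℝ) - k' = n * m := by exact_mod_cast congrArg (Int.cast : ℤ → ℝ) hm
    linarith
  have hnn : (n : ℝ) ≠ 0 := by positivity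
  have ha : (2 * (k:ℝ) - 1) * π / n = (2 * (k':ℝ) - 1) * π / n + m * (2 * π) := by
    rw [hk]; field_simp; ring
  unfold eEv
  rw [ha, Real.cos_add_int_mul_two_pi, Real.sin_add_int_mul_two_pi]

/-- The key parity fact for even `n`. -/
lemma key_parity {n : ℕ} (hn : Even n) (h4 : 4 ≤ n) (k : ℤ) :
    0 ≤ Real.cos (k * π / n) * Real.cos ((k - 1) * π / n) := by
  obtain ⟨m, hm⟩ := hn
  have hm2 : 2 ≤ m := by omega
  have hnpos : (0:ℝ) < n := by
    have : 0 < n := by omega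
    exact_mod_cast this
  have hπ := Real.pi_pos
  set q := k / n with hq
  set s := k % n with hs
  have hks : k = n * q + s := (Int.mul_ediv_add_emod k n).symm
  have hs0 : 0 ≤ s := Int.emod_nonneg k (by exact_mod_cast (by omega : n ≠ 0))
  have hs1 : s < n := Int.emod_lt_of_pos k (by exact_mod_cast (by omega : 0 < n))
  have e1 : (k:ℝ) * π / n = q * π - (-(s * π / n)) := by
    rw [hks]; push_cast; field_simp; ring
  have e2 : ((k:ℝ) - 1) * π / n = q * π - (-(((s:ℝ) - 1) * π / n)) := by
    rw [hks]; push_cast; field_simp; ring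
  rw [e1, e2, Real.cos_int_mul_pi_sub, Real.cos_int_mul_pi_sub, Real.cos_neg, Real.cos_neg]
  have hsign : ((-1:ℝ) ^ q) * ((-1:ℝ) ^ q) = 1 := by
    rw [← zpow_add₀ (by norm_num : (-1:ℝ) ≠ 0)]
    have : q + q = 2 * q := by ring
    rw [this, zpow_mul]; norm_num
  have main : 0 ≤ Real.cos ((s:ℝ) * π / n) * Real.cos (((s:ℝ) - 1) * π / n) := by
    rcases le_or_gt s m with hsm | hsm
    · apply mul_nonneg
      · apply Real.cos_nonneg_of_mem_Icc
        constructor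
        · have : (0:ℝ) ≤ (s:ℝ) * π / n := by positivity
          linarith
        · rw [div_le_iff₀ hnpos]
          have hsm' : (s:ℝ) ≤ m := by exact_mod_cast hsm
          have hnm : (n:ℝ) = 2 * m := by exact_mod_cast by omega
          nlinarith
      · apply Real.cos_nonneg_of_mem_Icc
        have hnm : (n:ℝ) = 2 * m := by exact_mod_cast by omega
        have hsm' : (s:ℝ) ≤ m := by exact_mod_cast hsm
        have hs0' : (0:ℝ) ≤ s := by exact_mod_cast hs0
        have hmpos : (0:ℝ) < m := by positivity
        have hm2' : (2:ℝ) ≤ m := by exact_mod_cast hm2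
        constructor
        · rw [le_div_iff₀ hnpos]
          nlinarith [mul_nonneg (show (0:ℝ) ≤ (s:ℝ) - 1 + m by linarith) hπ.le]
        · rw [div_le_iff₀ hnpos]
          nlinarith [mul_nonneg (show (0:ℝ) ≤ (m:ℝ) + 1 - s by linarith) hπ.le]
    · have hnm : (n:ℝ) = 2 * m := by exact_mod_cast by omega
      have hsm' : (m:ℝ) + 1 ≤ s := by exact_mod_cast hsm
      have hs1' : (s:ℝ) ≤ n - 1 := by
        have : s ≤ (n:ℤ) - 1 := by omega
        exact_mod_cast this
      have hmpos : (0:ℝ) < m := by positivity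
      have c1 : Real.cos ((s:ℝ) * π / n) ≤ 0 := by
        apply Real.cos_nonpos_of_pi_div_two_le_of_le
        · rw [le_div_iff₀ hnpos]; nlinarith
        · rw [div_le_iff₀ hnpos]; nlinarith
      have c2 : Real.cos (((s:ℝ) - 1) * π / n) ≤ 0 := by
        apply Real.cos_nonpos_of_pi_div_two_le_of_le
        · rw [le_div_iff₀ hnpos]; nlinarith
        · rw [div_le_iff₀ hnpos]; nlinarith
      nlinarith
  nlinarith [main, hsign, sq_nonneg ((-1:ℝ)^q)]

lemma cos_pin_pos {n : ℕ} (h4 : 4 ≤ n) : 0 < Real.cos (π / n) := by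
  have hπ := Real.pi_pos
  have hnpos : (0:ℝ) < n := by exact_mod_cast Nat.pos_of_ne_zero (by omega)
  have hn4 : (4:ℝ) ≤ n := by exact_mod_cast h4
  apply Real.cos_pos_of_mem_Ioo
  constructor
  · have : 0 < π / n := by positivity
    linarith
  · rw [div_lt_iff₀ hnpos]
    nlinarith

lemma ip_eEv_ωst_nonneg {n : ℕ} (hn : Even n) (h4 : 4 ≤ n) (j i : ℤ) :
    0 ≤ ip (eEv n j) (ωst n i) := by
  have hπ := Real.pi_pos
  have hnpos : (0:ℝ) < n := by exact_mod_cast Nat.pos_of_ne_zero (by omega)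
  have hnn : (n:ℝ) ≠ 0 := ne_of_gt hnpos
  have hc := cos_pin_pos h4
  have hr2 : rn n ^ 2 = 1 / Real.cos (π/n) := Real.sq_sqrt (by positivity)
  obtain ⟨k, hk⟩ : ∃ k : ℤ, k = j - i := ⟨_, rfl⟩
  have e3 : (2*(j:ℝ)-1)*π/n - 2*π*(i:ℝ)/n = (2*((k:ℤ):ℝ)-1)*π/n := by
    rw [hk]; push_cast; field_simp; ring
  have hX : Real.cos ((2*(j:ℝ)-1)*π/n) * Real.cos (2*π*(i:ℝ)/n)
      + Real.sin ((2*(j:ℝ)-1)*π/n) * Real.sin (2*π*(i:ℝ)/n)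
      = Real.cos ((2*((k:ℤ):ℝ)-1)*π/n) := by
    rw [← Real.cos_sub, e3]
  have e1 : (((2*((k:ℤ):ℝ)-1)*π/n) + π/n)/2 = ((k:ℤ):ℝ)*π/n := by field_simp; ring
  have e2 : (((2*((k:ℤ):ℝ)-1)*π/n) - π/n)/2 = (((k:ℤ):ℝ)-1)*π/n := by field_simp; ring
  have hcc : Real.cos ((2*((k:ℤ):ℝ)-1)*π/n) + Real.cos (π/n)
      = 2 * (Real.cos (((k:ℤ):ℝ)*π/n) * Real.cos ((((k:ℤ):ℝ)-1)*π/n)) := by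
    rw [Real.cos_add_cos, e1, e2]; ring
  have hkp := key_parity hn h4 k
  have hval : ip (eEv n j) (ωst n i)
      = (Real.cos ((2*((k:ℤ):ℝ)-1)*π/n) + Real.cos (π/n)) / (2 * Real.cos (π/n)) := by
    have h1 : ip (eEv n j) (ωst n i) = rn n ^ 2 / 2 *
        (Real.cos ((2*(j:ℝ)-1)*π/n) * Real.cos (2*π*(i:ℝ)/n)
        + Real.sin ((2*(j:ℝ)-1)*π/n) * Real.sin (2*π*(i:ℝ)/n)) + 1/2 := by
      simp [ip, eEv, ωst]; ring
    rw [h1, hX, hr2]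
    field_simp
  rw [hval]
  apply div_nonneg
  · linarith
  · positivity

/-- helper: the angular part of `ip f (ωst n k)`. -/
noncomputable def Gfun (f : Fin 3 → ℝ) (n : ℕ) (k : ℤ) : ℝ :=
  f 0 * Real.cos (2 * π * (k:ℝ) / n) + f 1 * Real.sin (2 * π * (k:ℝ) / n)

lemma ip_ωst (f : Fin 3 → ℝ) (n : ℕ) (k : ℤ) :
    ip f (ωst n k) = rn n * Gfun f n k + f 2 := by
  simp [ip, ωst, Gfun]; ring

lemma Gfun_congr {n : ℕ} (hn : 0 < n) (f : Fin 3 → ℝ) {k k' : ℤ} (h : (n:ℤ) ∣ (k - k')) :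
    Gfun f n k = Gfun f n k' := by
  obtain ⟨m, hm⟩ := h
  have hk : (k : ℝ) = k' + n * m := by
    have : (k : ℝ) - k' = n * m := by exact_mod_cast congrArg (Int.cast : ℤ → ℝ) hm
    linarith
  have hnn : (n : ℝ) ≠ 0 := by positivity
  have ha : 2 * π * (k:ℝ) / n = 2 * π * (k':ℝ) / n + m * (2 * π) := by
    rw [hk]; field_simp
  unfold Gfun
  rw [ha, Real.cos_add_int_mul_two_pi, Real.sin_add_int_mul_two_pi]

lemma Gfun_add_half {n m : ℕ} (hm : n = m + m) (hmpos : 0 < m) (f : Fin 3 → ℝ) (k : ℤ) :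
    Gfun f n (k + m) = - Gfun f n k := by
  have hnr : (n : ℝ) = 2 * m := by rw [hm]; push_cast; ring
  have hmr : (0:ℝ) < m := by exact_mod_cast hmpos
  have ha : 2 * π * ((k:ℝ) + m) / n = 2 * π * (k:ℝ) / n + π := by
    rw [hnr]; field_simp
  unfold Gfun
  push_cast
  rw [ha, Real.cos_add_pi, Real.sin_add_pi]
  ring

/-- antipodal pairing of even effects. -/
lemma eEv_antipodal {n m : ℕ} (hm : n = m + m) (hmpos : 0 < m) (k : ℤ) :
    eEv n (k + m) = uE - eEv n k := by
  have hnr : (n : ℝ) = 2 * m := by rw [hm]; push_cast; ring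
  have hmr : (0:ℝ) < m := by exact_mod_cast hmpos
  have ha : (2 * ((k:ℝ) + m) - 1) * π / n = (2 * (k:ℝ) - 1) * π / n + π := by
    rw [hnr]; field_simp; ring
  apply vec3_eq
  · simp only [eEv, uE, Pi.sub_apply, Matrix.cons_val_zero]
    push_cast
    rw [ha, Real.cos_add_pi]
    ring
  · simp only [eEv, uE, Pi.sub_apply, Matrix.cons_val_one, Matrix.head_cons]
    push_cast
    rw [ha, Real.sin_add_pi]
    ring
  · simp [eEv, uE]
    norm_num

lemma at0 (a b c : ℝ) : ![a,b,c] 0 = a := rfl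
lemma at1 (a b c : ℝ) : ![a,b,c] 1 = b := rfl
lemma at2 (a b c : ℝ) : ![a,b,c] 2 = c := rfl

lemma rotZ_sum {k : ℕ} (θ : ℝ) (c : Fin k → ℝ) (g : Fin k → Fin 3 → ℝ) :
    rotZ θ (∑ i, c i • g i) = ∑ i, c i • rotZ θ (g i) := by
  apply vec3_eq
  · simp only [rotZ, at0, at1, sum_comp]
    rw [Finset.mul_sum, Finset.mul_sum, ← Finset.sum_sub_distrib]
    exact Finset.sum_congr rfl fun i _ => by ring
  · simp only [rotZ, at0, at1, sum_comp]
    rw [Finset.mul_sum, Finset.mul_sum, ← Finset.sum_add_distrib]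
    exact Finset.sum_congr rfl fun i _ => by ring
  · simp only [rotZ, at2, sum_comp]

lemma rotZ_ωst {n : ℕ} (h4 : 4 ≤ n) (i : ℤ) :
    rotZ (π / n) (ωst n i) = (2:ℝ) • eEv n (i + 1) := by
  have hnn : (n : ℝ) ≠ 0 := by
    have : (0:ℝ) < n := by exact_mod_cast Nat.pos_of_ne_zero (by omega)
    positivity
  have ha : (2 * ((i:ℝ) + 1) - 1) * π / n = 2 * π * (i:ℝ) / n + π / n := by
    field_simp; ring
  apply vec3_eq
  · simp only [rotZ, ωst, eEv, at0, at1, Pi.smul_apply, smul_eq_mul]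
    push_cast
    rw [ha, Real.cos_add]
    ring
  · simp only [rotZ, ωst, eEv, at0, at1, Pi.smul_apply, smul_eq_mul]
    push_cast
    rw [ha, Real.sin_add]
    ring
  · simp only [rotZ, ωst, eEv, at2, Pi.smul_apply, smul_eq_mul]
    norm_num

lemma sum_shift {n : ℕ} [NeZero n] (c : Fin n → ℝ) :
    ∑ i : Fin n, c (i + 1) • eEv n (((i:ℕ):ℤ) + 1) = ∑ k : Fin n, c k • eEv n ((k:ℕ):ℤ) := by
  have npos : 0 < n := NeZero.pos n
  apply Fintype.sum_equiv (Equiv.addRight (1 : Fin n))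
  intro i
  simp only [Equiv.coe_addRight]
  have hv : ((i + 1 : Fin n) : ℕ) = ((i:ℕ) + 1) % n := by
    rw [Fin.val_add, Fin.val_one', Nat.add_mod_mod]
  have he : eEv n (((i:ℕ):ℤ) + 1) = eEv n (((i + 1 : Fin n) : ℕ) : ℤ) := by
    apply eEv_congr npos
    rw [hv]
    obtain ⟨t, ht⟩ := natmod_dvd n ((i:ℕ) + 1)
    refine ⟨-t, ?_⟩
    push_cast at ht ⊢
    linarith
  rw [he]

lemma effect_eq_rot {n : ℕ} (hn : Even n) (h4 : 4 ≤ n) :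
    effectConeEv n = rotZ (π / n) '' stateCone n := by
  have npos : 0 < n := by omega
  haveI : NeZero n := ⟨npos.ne'⟩
  ext f
  constructor
  · rintro ⟨c, hc, rfl⟩
    refine ⟨∑ i, (fun i => c (i + 1) / 2) i • ωst n ((i:ℕ):ℤ),
      ⟨_, fun i => div_nonneg (hc _) (by norm_num), rfl⟩, ?_⟩
    rw [rotZ_sum, ← sum_shift c]
    apply Finset.sum_congr rfl
    intro i _
    rw [rotZ_ωst h4, smul_smul, div_mul_cancel₀ _ (by norm_num : (2:ℝ) ≠ 0)]
  · rintro ⟨v, ⟨d, hd, rfl⟩, rfl⟩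
    refine ⟨fun k => 2 * d (k - 1), fun k => mul_nonneg (by norm_num) (hd _), ?_⟩
    rw [rotZ_sum, ← sum_shift (fun k => 2 * d (k - 1))]
    apply Finset.sum_congr rfl
    intro i _
    rw [rotZ_ωst h4, smul_smul, add_sub_cancel_right, mul_comm]

set_option maxHeartbeats 2000000 in
lemma dual_subset {n : ℕ} (hn : Even n) (h4 : 4 ≤ n) :
    dualCone (stateCone n) ⊆ effectConeEv n := by
  obtain ⟨m, hm⟩ := hn
  have hm2 : 2 ≤ m := by omega
  have npos : 0 < n := by omega
  haveI : NeZero n := ⟨npos.ne'⟩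
  have hπ := Real.pi_pos
  have hnpos : (0:ℝ) < n := by exact_mod_cast npos
  have hnn : (n:ℝ) ≠ 0 := ne_of_gt hnpos
  have hc := cos_pin_pos h4
  have hsp : 0 < Real.sin (π / n) := by
    apply Real.sin_pos_of_pos_of_lt_pi (by positivity)
    rw [div_lt_iff₀ hnpos]
    have h4' : (4:ℝ) ≤ n := by exact_mod_cast h4
    nlinarith [mul_le_mul_of_nonneg_left h4' hπ.le]
  have hr2 : rn n ^ 2 = 1 / Real.cos (π / n) := Real.sq_sqrt (by positivity)
  have hrpos : 0 < rn n := Real.sqrt_pos.mpr (by positivity)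
  intro f hf
  have hω : ∀ i : Fin n, 0 ≤ ip f (ωst n ((i:ℕ):ℤ)) := by
    intro i
    apply hf
    refine ⟨fun k => if k = i then 1 else 0, fun k => by dsimp only; split <;> norm_num, ?_⟩
    simp [ite_smul, Finset.sum_ite_eq']
  have hωZ : ∀ k : ℤ, 0 ≤ ip f (ωst n k) := by
    intro k
    have h1 : 0 ≤ k % n := Int.emod_nonneg k (by exact_mod_cast npos.ne')
    have h2 : k % n < n := Int.emod_lt_of_pos k (by exact_mod_cast npos)
    have hlt : (k % n).toNat < n := by omega
    have heq : ωst n (((⟨(k % n).toNat, hlt⟩ : Fin n) : ℕ) : ℤ) = ωst n k := by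
      apply ωst_congr npos
      have ht : ((((⟨(k % ↑n).toNat, hlt⟩ : Fin n) : ℕ)) : ℤ) = k % n := Int.toNat_of_nonneg h1
      rw [ht]
      exact ⟨-(k / n), by have := Int.mul_ediv_add_emod k (n:ℤ); linarith⟩
    have := hω ⟨(k % n).toNat, hlt⟩
    rwa [heq] at this
  obtain ⟨j₀, -, hj₀⟩ := Finset.exists_max_image Finset.univ
      (fun i : Fin n => Gfun f n ((i:ℕ):ℤ)) ⟨⟨0, npos⟩, Finset.mem_univ _⟩
  set j : ℤ := ((j₀ : ℕ) : ℤ) with hj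
  have hmax : ∀ x : ℕ, Gfun f n (x:ℤ) ≤ Gfun f n j := by
    intro x
    have hlt : x % n < n := Nat.mod_lt _ npos
    have hle := hj₀ ⟨x % n, hlt⟩ (Finset.mem_univ _)
    have he : Gfun f n (((⟨x % n, hlt⟩ : Fin n) : ℕ) : ℤ) = Gfun f n (x:ℤ) :=
      Gfun_congr npos f (natmod_dvd n x)
    rw [he] at hle
    exact hle
  have hG1 : Gfun f n (j + 1) ≤ Gfun f n j := by
    have h := hmax ((j₀:ℕ) + 1)
    rwa [show (((j₀:ℕ) + 1 : ℕ) : ℤ) = j + 1 by push_cast [hj]; ring] at h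
  have hG2 : Gfun f n (j - 1) ≤ Gfun f n j := by
    have h := hmax ((j₀:ℕ) + (n - 1))
    have he : Gfun f n ((((j₀:ℕ) + (n-1) : ℕ)) : ℤ) = Gfun f n (j - 1) := by
      apply Gfun_congr npos
      refine ⟨1, ?_⟩
      push_cast [Nat.cast_sub (by omega : 1 ≤ n)]
      ring
    rw [he] at h
    exact h
  have hδ0 : 0 ≤ f 2 - rn n * Gfun f n j := by
    have h := hωZ (j + m)
    rw [ip_ωst, Gfun_add_half hm (by omega) f j] at h
    linarith
  set p : ℝ := π / n with hp
  set A : ℝ := 2 * π * (j:ℝ) / n with hA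
  set cp := Real.cos p with hcp
  set sp := Real.sin p with hspd
  clear_value p A cp sp
  have hθ : (2*(j:ℝ) - 1) * π / n = A - p := by rw [hA, hp]; field_simp
  have hθ' : (2*((j:ℝ)+1) - 1) * π / n = A + p := by rw [hA, hp]; field_simp; ring
  have hGj : Gfun f n j = f 0 * Real.cos A + f 1 * Real.sin A := by
    rw [hA]; simp only [Gfun]
  have hGj1 : Gfun f n (j+1) = f 0 * Real.cos (A + 2*p) + f 1 * Real.sin (A + 2*p) := by
    have e : 2 * π * ((j:ℝ)+1) / n = A + 2*p := by rw [hA, hp]; field_simp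
    unfold Gfun; push_cast; rw [e]
  have hGjm1 : Gfun f n (j-1) = f 0 * Real.cos (A - 2*p) + f 1 * Real.sin (A - 2*p) := by
    have e : 2 * π * ((j:ℝ)-1) / n = A - 2*p := by rw [hA, hp]; field_simp
    unfold Gfun; push_cast; rw [e]
  have hcc1 : Real.cos A - Real.cos (A + 2*p) = 2 * sp * Real.sin (A + p) := by
    rw [Real.cos_sub_cos, show (A + (A + 2*p)) / 2 = A + p by ring,
      show (A - (A + 2*p))/2 = -p by ring, Real.sin_neg, hspd]
    ring
  have hss1 : Real.sin A - Real.sin (A + 2*p) = -(2 * sp * Real.cos (A + p)) := by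
    rw [Real.sin_sub_sin, show (A - (A + 2*p))/2 = -p by ring,
      show (A + (A + 2*p))/2 = A + p by ring, Real.sin_neg, hspd]
    ring
  have hcc2 : Real.cos A - Real.cos (A - 2*p) = -(2 * sp * Real.sin (A - p)) := by
    rw [Real.cos_sub_cos, show (A + (A - 2*p))/2 = A - p by ring,
      show (A - (A - 2*p))/2 = p by ring, hspd]
    ring
  have hss2 : Real.sin A - Real.sin (A - 2*p) = 2 * sp * Real.cos (A - p) := by
    rw [Real.sin_sub_sin, show (A - (A - 2*p))/2 = p by ring,
      show (A + (A - 2*p))/2 = A - p by ring, hspd]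
  set cross1 := f 0 * Real.sin (A + p) - f 1 * Real.cos (A + p) with hcr1
  set cross2 := Real.cos (A - p) * f 1 - Real.sin (A - p) * f 0 with hcr2
  clear_value cross1 cross2
  have key1 : 2 * sp * cross1 = Gfun f n j - Gfun f n (j+1) := by
    rw [hGj, hGj1, hcr1]
    linear_combination (-(f 0)) * hcc1 - f 1 * hss1
  have key2 : 2 * sp * cross2 = Gfun f n j - Gfun f n (j-1) := by
    rw [hGj, hGjm1, hcr2]
    linear_combination (-(f 0)) * hcc2 - f 1 * hss2
  have hsp2 : (0:ℝ) < 2 * sp := by linarith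
  have hcross1 : 0 ≤ cross1 := by
    have h2 : 0 ≤ 2 * sp * cross1 := by rw [key1]; linarith
    have e : cross1 = (2 * sp * cross1) / (2 * sp) := by field_simp
    rw [e]; exact div_nonneg h2 hsp2.le
  have hcross2 : 0 ≤ cross2 := by
    have h2 : 0 ≤ 2 * sp * cross2 := by rw [key2]; linarith
    have e : cross2 = (2 * sp * cross2) / (2 * sp) := by field_simp
    rw [e]; exact div_nonneg h2 hsp2.le
  have hsum12 : cross1 + cross2 = 2 * sp * Gfun f n j := by
    have e1 : Real.sin (A+p) - Real.sin (A-p) = 2 * sp * Real.cos A := by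
      rw [Real.sin_sub_sin, show (A+p - (A-p))/2 = p by ring,
        show (A+p+(A-p))/2 = A by ring, hspd]
    have e2 : Real.cos (A-p) - Real.cos (A+p) = 2 * sp * Real.sin A := by
      rw [Real.cos_sub_cos, show (A-p+(A+p))/2 = A by ring,
        show (A-p-(A+p))/2 = -p by ring, Real.sin_neg, hspd]
      ring
    rw [hcr1, hcr2, hGj]
    linear_combination f 0 * e1 + f 1 * e2
  have hD : Real.sin (A+p) * Real.cos (A-p) - Real.cos (A+p) * Real.sin (A-p) = 2 * sp * cp := by
    rw [← Real.sin_sub, show A + p - (A - p) = 2*p by ring, Real.sin_two_mul, hspd, hcp]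
  have hr2c : rn n ^ 2 * cp = 1 := by
    rw [hr2]; field_simp
  have hDpos : 0 < 2 * sp * cp :=
    mul_pos (mul_pos (by norm_num : (0:ℝ) < 2) hsp) hc
  set α := 2 * cross1 / (rn n * (2 * sp * cp)) with hαd
  set β := 2 * cross2 / (rn n * (2 * sp * cp)) with hβd
  set δ := f 2 - rn n * Gfun f n j with hδd
  clear_value α β δ
  have hα0 : 0 ≤ α := by rw [hαd]; exact div_nonneg (by linarith) (le_of_lt (mul_pos hrpos hDpos))
  have hβ0 : 0 ≤ β := by rw [hβd]; exact div_nonneg (by linarith) (le_of_lt (mul_pos hrpos hDpos))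
  have hrD : rn n * (2 * sp * cp) ≠ 0 := ne_of_gt (mul_pos hrpos hDpos)
  have hdec : f = α • eEv n j + β • eEv n (j+1) + δ • uE := by
    apply vec3_eq
    · simp only [eEv, uE, at0, Pi.add_apply, Pi.smul_apply, smul_eq_mul]
      push_cast
      rw [hθ, hθ', hαd, hβd, hcr1, hcr2]
      field_simp
      linear_combination (-(f 0)) * hD
    · simp only [eEv, uE, at1, Pi.add_apply, Pi.smul_apply, smul_eq_mul]
      push_cast
      rw [hθ, hθ', hαd, hβd, hcr1, hcr2]
      field_simp
      linear_combination (-(f 1)) * hD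
    · simp only [eEv, uE, at2, Pi.add_apply, Pi.smul_apply, smul_eq_mul]
      rw [hαd, hβd, hδd]
      field_simp
      linear_combination (-1 : ℝ) * hsum12 + (2 * sp * Gfun f n j) * hr2c
  have hb : eEv n (j + 1) = eEv n ((((j₀ + 1 : Fin n) : ℕ)) : ℤ) := by
    apply eEv_congr npos
    have hv : ((j₀ + 1 : Fin n) : ℕ) = ((j₀:ℕ) + 1) % n := by
      rw [Fin.val_add, Fin.val_one', Nat.add_mod_mod]
    rw [hv]
    obtain ⟨t, ht⟩ := natmod_dvd n ((j₀:ℕ)+1)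
    refine ⟨-t, ?_⟩
    push_cast [hj] at ht ⊢
    linarith
  have hqlt : ((j₀:ℕ) + m) % n < n := Nat.mod_lt _ npos
  have hqe : eEv n ((((⟨((j₀:ℕ) + m) % n, hqlt⟩ : Fin n):ℕ)):ℤ) = eEv n (j + m) := by
    apply eEv_congr npos
    obtain ⟨t, ht⟩ := natmod_dvd n ((j₀:ℕ) + m)
    refine ⟨t, ?_⟩
    push_cast [hj] at ht ⊢
    linarith
  have hanti : eEv n (j + m) = uE - eEv n j := eEv_antipodal hm (by omega) j
  refine ⟨fun k => (if k = j₀ then α else 0) + (if k = j₀ + 1 then β else 0)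
      + (if k = j₀ then δ else 0) + (if k = (⟨((j₀:ℕ) + m) % n, hqlt⟩ : Fin n) then δ else 0), ?_, ?_⟩
  · intro k
    dsimp only
    split_ifs <;> linarith
  · have hsplit : ∑ k : Fin n, ((if k = j₀ then α else 0) + (if k = j₀+1 then β else 0)
        + (if k = j₀ then δ else 0) + (if k = (⟨((j₀:ℕ) + m) % n, hqlt⟩ : Fin n) then δ else 0)) • eEv n ((k:ℕ):ℤ)
        = α • eEv n ((j₀:ℕ):ℤ) + β • eEv n (((j₀+1 : Fin n):ℕ):ℤ)
          + δ • eEv n ((j₀:ℕ):ℤ) + δ • eEv n ((((⟨((j₀:ℕ) + m) % n, hqlt⟩ : Fin n)):ℕ):ℤ) := by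
      simp [add_smul, Finset.sum_add_distrib, ite_smul, Finset.sum_ite_eq']
    rw [hsplit, ← hb, hqe, hanti, ← hj, hdec]
    rw [smul_sub]
    abel

theorem ngon_even_weak_self_duality (n : ℕ) (hn : Even n) (h4 : 4 ≤ n) :
    dualCone (stateCone n) = effectConeEv n ∧
    dualCone (stateCone n) = rotZ (π / n) '' stateCone n := by
  have h1 : dualCone (stateCone n) = effectConeEv n := by
    apply subset_antisymm (dual_subset hn h4)
    rintro f ⟨c, hc, rfl⟩ v ⟨d, hd, rfl⟩
    rw [ip_sum]
    apply Finset.sum_nonneg; intro i _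
    apply mul_nonneg (hd i)
    rw [ip_sum']
    apply Finset.sum_nonneg; intro jj _
    exact mul_nonneg (hc jj) (ip_eEv_ωst_nonneg hn h4 _ _)
  exact ⟨h1, h1.trans (effect_eq_rot hn h4)⟩
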